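/- Fix constants C ∈ ℝ and τ > 0, and for n large set R = 2·log(n) + C, ρ(n) = R − log((π/2)·e^{C/2}·γ(n,τ)), θ_n = arccos((cosh(ρ(n))² − cosh(R))/sinh(ρ(n))²), and p_n = θ_n/(2π). Then for all sufficiently large n: 1 − e^{−γ(n,τ)/4} ≤ 1 − (1 − p_n)^n ≤ exp(−e^{−γ(n,τ)}). -/

import Mathlib

set_option maxHeartbeats 1000000


open Filter

/-- Twice iterated natural logarithm. -/
noncomputable def loglog (n : ℕ) : ℝ := Real.log (Real.log n)

/-- Thrice iterated natural logarithm. -/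
noncomputable def logloglog (n : ℕ) : ℝ := Real.log (Real.log (Real.log n))

/-- `γ(n, τ) = log(τ·log^{(2)}(n) / (2·(log^{(3)}(n))²))`. -/
noncomputable def gam (n : ℕ) (τ : ℝ) : ℝ :=
  Real.log (τ * loglog n / (2 * (logloglog n) ^ 2))

/-- The radius `R = 2·log n + C` of the hyperbolic disk. -/
noncomputable def bigR (C : ℝ) (n : ℕ) : ℝ := 2 * Real.log n + C

/-- The threshold radius `ρ(n) = R − log((π/2)·e^{C/2}·γ(n,τ))`. -/
noncomputable def rho (C τ : ℝ) (n : ℕ) : ℝ :=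
  bigR C n - Real.log (Real.pi / 2 * Real.exp (C / 2) * gam n τ)

/-- `θ_n`, the maximal angular distance at which two points of radius `ρ(n)` are
adjacent in the hyperbolic disk of radius `R`. -/
noncomputable def theta (C τ : ℝ) (n : ℕ) : ℝ :=
  Real.arccos ((Real.cosh (rho C τ n) ^ 2 - Real.cosh (bigR C n)) /
    Real.sinh (rho C τ n) ^ 2)

/-- **Probability that a sector is non-empty.**
With `p_n = θ_n/(2π)` the probability that one of `n` independent uniform angles falls
in a fixed sector of width `θ_n`, for all sufficiently large `n`,
`1 − e^{−γ(n,τ)/4} ≤ 1 − (1 − p_n)^n ≤ exp(−e^{−γ(n,τ)})`. -/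
lemma my_exp_neg_le_one_sub {p : ℝ} (h0 : 0 ≤ p) (h1 : p ≤ 1/4) :
    Real.exp (-(4/3*p)) ≤ 1 - p := by
  have h := Real.add_one_le_exp (4/3*p)
  have hE : (0:ℝ) < Real.exp (4/3*p) := Real.exp_pos _
  have key : Real.exp (-(4/3*p)) * Real.exp (4/3*p) = 1 := by
    rw [← Real.exp_add]; simp
  nlinarith only [h0, h1, h, hE, key, Real.exp_pos (-(4/3*p))]

lemma my_arccos_le {x t : ℝ} (ht0 : 0 ≤ t) (htpi : t ≤ Real.pi)
    (h : Real.cos t ≤ x) : Real.arccos x ≤ t := by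
  rcases le_or_gt 1 x with h1 | h1
  · rw [Real.arccos_of_one_le h1]; exact ht0
  · have hx1 : -1 ≤ x := le_trans (Real.neg_one_le_cos t) h
    by_contra hcon
    push_neg at hcon
    have := Real.strictAntiOn_cos ⟨ht0, htpi⟩
      ⟨Real.arccos_nonneg x, Real.arccos_le_pi x⟩ hcon
    rw [Real.cos_arccos hx1 h1.le] at this
    linarith

lemma my_le_arccos {x s : ℝ} (hs0 : 0 ≤ s) (hspi : s ≤ Real.pi)
    (hx1 : -1 ≤ x) (h : x ≤ Real.cos s) : s ≤ Real.arccos x := by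
  have hxle : x ≤ 1 := le_trans h (Real.cos_le_one s)
  by_contra hcon
  push_neg at hcon
  have := Real.strictAntiOn_cos ⟨Real.arccos_nonneg x, Real.arccos_le_pi x⟩
    ⟨hs0, hspi⟩ hcon
  rw [Real.cos_arccos hx1 hxle] at this
  linarith

theorem prob_sector_nonempty (C τ : ℝ) (hτ : 0 < τ) :
    ∀ᶠ n : ℕ in atTop,
      1 - Real.exp (-gam n τ / 4) ≤ 1 - (1 - theta C τ n / (2 * Real.pi)) ^ n ∧
      1 - (1 - theta C τ n / (2 * Real.pi)) ^ n ≤ Real.exp (-Real.exp (-gam n τ)) := by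
  have hlogt : Tendsto (fun n : ℕ => Real.log n) atTop atTop :=
    Real.tendsto_log_atTop.comp tendsto_natCast_atTop_atTop
  have hllt : Tendsto (fun n : ℕ => loglog n) atTop atTop :=
    Real.tendsto_log_atTop.comp hlogt
  have hNt : Tendsto (fun n : ℕ => (n:ℝ)) atTop atTop := tendsto_natCast_atTop_atTop
  filter_upwards [eventually_ge_atTop 1,
    hlogt.eventually (eventually_ge_atTop (22 + |C| + |Real.log τ|)),
    hllt.eventually (eventually_ge_atTop (max (Real.exp 1) ((32 * Real.exp 1 / τ) ^ 2))),
    hNt.eventually (eventually_ge_atTop ((max 4000 |Real.log τ|) ^ 2))]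
    with n hn1 hL hy hN
  set N : ℝ := (n:ℝ) with hNdef
  have hN1 : (1:ℝ) ≤ N := by rw [hNdef]; exact_mod_cast hn1
  have hN0 : (0:ℝ) < N := by linarith only [hN1]
  set A := Real.log τ with hAdef
  set L := Real.log N with hLdef
  set y := loglog n with hydef
  set z := logloglog n with hzdef
  set γ := gam n τ with hgdef
  have hyL : y = Real.log L := rfl
  have hzy : z = Real.log y := rfl
  have hγdef2 : γ = Real.log (τ * y / (2 * z ^ 2)) := rfl
  have hye : Real.exp 1 ≤ y := le_trans (le_max_left _ _) hy
  have hyτ : (32 * Real.exp 1 / τ) ^ 2 ≤ y := le_trans (le_max_right _ _) hy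
  have he1 : (2:ℝ) ≤ Real.exp 1 := by linarith only [Real.add_one_le_exp 1]
  have hy2 : (2:ℝ) ≤ y := le_trans he1 hye
  have hy0 : (0:ℝ) < y := by linarith only [hy2]
  have hz1 : (1:ℝ) ≤ z := by
    have h := Real.log_le_log (Real.exp_pos 1) hye
    rw [Real.log_exp] at h; exact le_trans (le_of_eq rfl) h
  have hz0 : (0:ℝ) < z := by linarith only [hz1]
  have habsC := abs_nonneg C
  have habsA := abs_nonneg A
  have hL22 : 22 + |C| + |A| ≤ L := hL
  have hLpos : (0:ℝ) < L := by linarith only [hL22, habsC, habsA]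
  -- z² ≤ 16 √y
  have hss0 : (0:ℝ) < Real.sqrt (Real.sqrt y) := Real.sqrt_pos.2 (Real.sqrt_pos.2 hy0)
  have hz4 : z ≤ 4 * Real.sqrt (Real.sqrt y) := by
    have h1 : z = 4 * Real.log (Real.sqrt (Real.sqrt y)) := by
      rw [Real.log_sqrt (Real.sqrt_nonneg y), Real.log_sqrt hy0.le, hzy]; ring
    have h2 := Real.log_le_sub_one_of_pos hss0
    linarith only [h1, h2, hss0]
  have hsqsq : (Real.sqrt (Real.sqrt y)) ^ 2 = Real.sqrt y := Real.sq_sqrt (Real.sqrt_nonneg y)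
  have hz16 : z ^ 2 ≤ 16 * Real.sqrt y := by
    nlinarith only [hz4, hsqsq, hz0.le, hss0.le]
  -- γ ≥ 1
  have hsy : Real.sqrt y * Real.sqrt y = y := Real.mul_self_sqrt hy0.le
  have hsy0 : (0:ℝ) < Real.sqrt y := Real.sqrt_pos.2 hy0
  have hsyτ : 32 * Real.exp 1 / τ ≤ Real.sqrt y := by
    have h := Real.sqrt_le_sqrt hyτ
    rwa [Real.sqrt_sq (by positivity)] at h
  have h32 : 32 * Real.exp 1 ≤ τ * Real.sqrt y := by
    rw [div_le_iff₀ hτ] at hsyτ; linarith only [hsyτ]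
  have harg_lo : Real.exp 1 ≤ τ * Real.sqrt y / 32 := by linarith only [h32]
  have hτy : τ * (Real.sqrt y * Real.sqrt y) = τ * y := by rw [hsy]
  have hstep : τ * Real.sqrt y / 32 ≤ τ * y / (2 * z ^ 2) := by
    rw [div_le_div_iff₀ (by norm_num) (by positivity)]
    nlinarith only [hz16, hτy, mul_nonneg hτ.le hsy0.le]
  have hγ1 : 1 ≤ γ := by
    have h := Real.log_le_log (Real.exp_pos 1) (le_trans harg_lo hstep)
    rw [Real.log_exp] at h
    exact le_trans h (le_of_eq hγdef2.symm)
  have hγ0 : (0:ℝ) < γ := by linarith only [hγ1]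
  -- γ ≤ A + L
  have hγA : γ ≤ A + z := by
    have h1 : τ * y / (2 * z ^ 2) ≤ τ * y := by
      apply div_le_self (by positivity)
      nlinarith only [hz1]
    have h2 : γ ≤ Real.log (τ * y) := by
      rw [hγdef2]
      exact Real.log_le_log (by positivity) h1
    rwa [Real.log_mul (ne_of_gt hτ) (ne_of_gt hy0), ← hzy] at h2
  have hzley : z ≤ y := by
    have h := Real.log_le_sub_one_of_pos hy0
    rw [← hzy] at h; linarith only [h]
  have hylel : y ≤ L := by
    have h := Real.log_le_sub_one_of_pos hLpos
    rw [← hyL] at h; linarith only [h]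
  have hγAL : γ ≤ A + L := by linarith only [hγA, hzley, hylel]
  -- γ ≤ 0.001 N
  have hsN : Real.sqrt N * Real.sqrt N = N := Real.mul_self_sqrt hN0.le
  have hsNmax : max 4000 |A| ≤ Real.sqrt N := by
    have h := Real.sqrt_le_sqrt hN
    rwa [Real.sqrt_sq (le_trans (by norm_num) (le_max_left (4000:ℝ) |A|))] at h
  have hsN4 : (4000:ℝ) ≤ Real.sqrt N := le_trans (le_max_left _ _) hsNmax
  have hsNA : |A| ≤ Real.sqrt N := le_trans (le_max_right _ _) hsNmax
  have hL2s : L ≤ 2 * Real.sqrt N := by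
    have h1 : L = 2 * Real.log (Real.sqrt N) := by
      rw [Real.log_sqrt hN0.le]; ring
    have h2 := Real.log_le_sub_one_of_pos (Real.sqrt_pos.2 hN0)
    linarith only [h1, h2]
  have hγN : γ ≤ 0.001 * N := by
    nlinarith only [hsN, hsN4, hγAL, hsNA, hL2s, Real.sqrt_nonneg N, le_abs_self A]
  -- R and ρ
  set Rv := bigR C n with hRdef
  have hRv : Rv = 2 * L + C := rfl
  have hnegC := neg_abs_le C
  have hnegA := neg_abs_le A
  have hR20 : 20 ≤ Rv := by rw [hRv]; linarith only [hL22, hnegC, habsA, habsC]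
  set K := Real.pi / 2 * Real.exp (C / 2) * γ with hKdef
  have hπ0 : (0:ℝ) < Real.pi := Real.pi_pos
  have hπ4 : Real.pi ≤ 4 := Real.pi_le_four
  have hK0 : (0:ℝ) < K := by rw [hKdef]; positivity
  have hlogK : Real.log K = Real.log (Real.pi / 2) + C / 2 + Real.log γ := by
    rw [hKdef, Real.log_mul (by positivity) (ne_of_gt hγ0),
      Real.log_mul (by positivity) (by positivity), Real.log_exp]
  have hlogπ : Real.log (Real.pi / 2) ≤ 1 := by
    have h := Real.log_le_sub_one_of_pos (by positivity : (0:ℝ) < Real.pi / 2)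
    linarith only [h, hπ4]
  have hlogγ : Real.log γ ≤ A + L := by
    have h := Real.log_le_sub_one_of_pos hγ0
    linarith only [h, hγAL]
  set ρv := rho C τ n with hρdef
  have hρv : ρv = Rv - Real.log K := rfl
  have hρ20 : 20 ≤ ρv := by
    rw [hρv, hRv, hlogK]
    linarith only [hL22, hlogπ, hlogγ, hnegC, le_abs_self A, habsC, habsA]
  -- exponential quantities
  have hexpL : Real.exp L = N := Real.exp_log hN0
  have hexpR : Real.exp Rv = N ^ 2 * Real.exp C := by
    rw [hRv, Real.exp_add]
    have h2 : Real.exp (2 * L) = N ^ 2 := by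
      rw [two_mul, Real.exp_add, hexpL]; ring
    rw [h2]
  set E := Real.exp ρv with hEdef
  have hE0 : (0:ℝ) < E := Real.exp_pos _
  have hEeq : E = Real.exp Rv / K := by
    rw [hEdef, hρv, Real.exp_sub, Real.exp_log hK0]
  have hE21 : 21 ≤ E := by
    rw [hEdef]; linarith only [Real.add_one_le_exp ρv, hρ20]
  have hexpR0 : (0:ℝ) < Real.exp Rv := Real.exp_pos _
  have hexpR21 : 21 ≤ Real.exp Rv := by
    linarith only [Real.add_one_le_exp Rv, hR20]
  set W := Real.pi * γ / N with hWdef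
  have hW0 : (0:ℝ) < W := by rw [hWdef]; positivity
  have hCC : Real.exp C = Real.exp (C / 2) * Real.exp (C / 2) := by
    rw [← Real.exp_add]; ring_nf
  have hWE : W * E = 2 * N * Real.exp (C / 2) := by
    rw [hWdef, hEeq, hexpR, hKdef, hCC]
    have hπne : Real.pi ≠ 0 := ne_of_gt hπ0
    have hNne : N ≠ 0 := ne_of_gt hN0
    have hγne : γ ≠ 0 := ne_of_gt hγ0
    have hene : Real.exp (C / 2) ≠ 0 := ne_of_gt (Real.exp_pos _)
    field_simp
  have hWE2 : W ^ 2 * E ^ 2 = 4 * Real.exp Rv := by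
    have h : (W * E) ^ 2 = (2 * N * Real.exp (C / 2)) ^ 2 := by rw [hWE]
    have h2 : (2 * N * Real.exp (C / 2)) ^ 2 = 4 * (N ^ 2 * Real.exp C) := by
      rw [hCC]; ring
    rw [← hexpR] at h2
    nlinarith only [h, h2]
  -- sinh and cosh bounds
  have hρ0 : (0:ℝ) < ρv := by linarith only [hρ20]
  have hsinh_pos : 0 < Real.sinh ρv := Real.sinh_pos_iff.2 hρ0
  have hSsq_pos : 0 < Real.sinh ρv ^ 2 := by positivity
  have hEinv : Real.exp (-ρv) = E⁻¹ := by rw [Real.exp_neg, hEdef]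
  have hEinv0 : (0:ℝ) < E⁻¹ := by positivity
  have hEE : E * E⁻¹ = 1 := mul_inv_cancel₀ (ne_of_gt hE0)
  have hsinh_eq : Real.sinh ρv = (E - E⁻¹) / 2 := by
    rw [Real.sinh_eq, hEinv, hEdef]
  have hEinv1 : E⁻¹ ≤ 1 := by nlinarith only [hEE, hE21, hEinv0.le]
  have hsinh_up : Real.sinh ρv ^ 2 ≤ E ^ 2 / 4 := by
    rw [hsinh_eq]; nlinarith only [hEE, hEinv0.le, hEinv1]
  have hsinh_lo : 0.225 * E ^ 2 ≤ Real.sinh ρv ^ 2 := by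
    rw [hsinh_eq]
    nlinarith only [hEE, hE21, hEinv0.le, sq_nonneg E⁻¹, sq_nonneg (E - 21)]
  have hcosh_eq : Real.cosh Rv = (Real.exp Rv + Real.exp (-Rv)) / 2 := Real.cosh_eq Rv
  have hexpnegR0 : (0:ℝ) < Real.exp (-Rv) := Real.exp_pos _
  have hexpnegR1 : Real.exp (-Rv) ≤ 1 := by
    rw [Real.exp_neg]
    nlinarith only [mul_inv_cancel₀ (ne_of_gt hexpR0), hexpR21,
      inv_nonneg.2 hexpR0.le]
  have hcosh_up : Real.cosh Rv - 1 ≤ Real.exp Rv / 2 := by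
    rw [hcosh_eq]; linarith only [hexpnegR1]
  have hcosh_lo : 0.45 * Real.exp Rv ≤ Real.cosh Rv - 1 := by
    rw [hcosh_eq]; linarith only [hexpR21, hexpnegR0.le]
  -- the quantity D
  set D := (Real.cosh Rv - 1) / Real.sinh ρv ^ 2 with hDdef
  have hD_lo : 0.45 * W ^ 2 ≤ D := by
    rw [hDdef, le_div_iff₀ hSsq_pos]
    nlinarith only [hWE2, hsinh_up, hcosh_lo, sq_nonneg W]
  have hD_up : D ≤ 5 / 9 * W ^ 2 := by
    rw [hDdef, div_le_iff₀ hSsq_pos]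
    nlinarith only [hWE2, hsinh_lo, hcosh_up, sq_nonneg W]
  -- theta as arccos (1 - D)
  have hSne : Real.sinh ρv ^ 2 ≠ 0 := ne_of_gt hSsq_pos
  have harg : (Real.cosh ρv ^ 2 - Real.cosh Rv) / Real.sinh ρv ^ 2 = 1 - D := by
    rw [hDdef, eq_sub_iff_add_eq, ← add_div, div_eq_one_iff_eq hSne,
      Real.sinh_sq]
    ring
  have hθ : theta C τ n = Real.arccos (1 - D) := by
    unfold theta
    rw [← hρdef, ← hRdef, harg]
  -- bounds on W
  have hWsmall : W ≤ 0.004 := by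
    rw [hWdef, div_le_iff₀ hN0]
    nlinarith only [hπ4, hγ0.le, hγN, hπ0.le]
  have hW2 : W ^ 2 ≤ 0.000016 := by nlinarith only [hW0.le, hWsmall]
  -- cosine bounds
  have ht0 : (0:ℝ) ≤ 1.2 * W := by linarith only [hW0]
  have htabs : |1.2 * W| ≤ 1 := by
    rw [abs_of_nonneg ht0]; linarith only [hWsmall]
  have hcos_t : Real.cos (1.2 * W) ≤ 1 - 0.7 * W ^ 2 := by
    have hb := Real.cos_bound htabs
    have h1 := (abs_le.1 hb).2
    rw [abs_of_nonneg ht0] at h1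
    nlinarith only [h1, hW2, sq_nonneg W]
  have hcos_s : 1 - 0.33 * W ^ 2 ≤ Real.cos (0.8 * W) := by
    have h := Real.one_sub_sq_div_two_le_cos (x := 0.8 * W)
    nlinarith only [h, sq_nonneg W]
  -- theta bounds
  have hπ3 : (3:ℝ) ≤ Real.pi := by linarith only [Real.pi_gt_three]
  have htpi : 1.2 * W ≤ Real.pi := by linarith only [hπ3, hWsmall, hW0.le]
  have hθ_up : theta C τ n ≤ 1.2 * W := by
    rw [hθ]
    apply my_arccos_le ht0 htpi
    linarith only [hcos_t, hD_up, sq_nonneg W]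
  have hθ_lo : 0.8 * W ≤ theta C τ n := by
    rw [hθ]
    apply my_le_arccos (by linarith only [hW0]) (by linarith only [htpi, hW0.le]) ?_ ?_
    · linarith only [hD_up, hW2]
    · nlinarith only [hcos_s, hD_lo, sq_nonneg W]
  -- the probability p
  set P := theta C τ n / (2 * Real.pi) with hPdef
  have h2π0 : (0:ℝ) < 2 * Real.pi := by linarith only [hπ0]
  have hp_lo : 0.4 * γ / N ≤ P := by
    rw [hPdef, le_div_iff₀ h2π0]
    have h08 : 0.4 * γ / N * (2 * Real.pi) = 0.8 * W := by
      rw [hWdef]; field_simp; ring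
    rw [h08]; exact hθ_lo
  have hp_up : P ≤ 0.6 * γ / N := by
    rw [hPdef, div_le_iff₀ h2π0]
    have h12 : 0.6 * γ / N * (2 * Real.pi) = 1.2 * W := by
      rw [hWdef]; field_simp; ring
    rw [h12]; exact hθ_up
  have hP0 : 0 ≤ P := by
    have h := Real.arccos_nonneg (1 - D)
    rw [← hθ] at h
    rw [hPdef]; exact div_nonneg h h2π0.le
  have hgNr : γ / N ≤ 0.001 := by rw [div_le_iff₀ hN0]; linarith only [hγN]
  have hup2 : 0.6 * γ / N ≤ 1 / 4 := by
    rw [div_le_iff₀ hN0]; linarith only [hγN, hN0]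
  have hP14 : P ≤ 1 / 4 := le_trans hp_up hup2
  -- products N * P
  have hNP_lo : 0.4 * γ ≤ N * P := by
    have h := mul_le_mul_of_nonneg_left hp_lo hN0.le
    have heq : N * (0.4 * γ / N) = 0.4 * γ := by field_simp
    linarith only [h, heq]
  have hNP_up : N * P ≤ 0.6 * γ := by
    have h := mul_le_mul_of_nonneg_left hp_up hN0.le
    have heq : N * (0.6 * γ / N) = 0.6 * γ := by field_simp
    linarith only [h, heq]
  -- first inequality
  have h1p : 0 ≤ 1 - P := by linarith only [hP14]
  have hbp : 1 - P ≤ Real.exp (-P) := by linarith only [Real.add_one_le_exp (-P)]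
  have hpow1 : (1 - P) ^ n ≤ Real.exp (-P) ^ n := pow_le_pow_left₀ h1p hbp n
  rw [← Real.exp_nat_mul] at hpow1
  rw [← hNdef] at hpow1
  have hmono1 : Real.exp (N * -P) ≤ Real.exp (-γ / 4) := by
    apply Real.exp_le_exp.2
    linarith only [hNP_lo, hγ0]
  -- second inequality
  have hb2 : Real.exp (-(4 / 3 * P)) ≤ 1 - P := my_exp_neg_le_one_sub hP0 hP14
  have hpow2 : Real.exp (-(4 / 3 * P)) ^ n ≤ (1 - P) ^ n :=
    pow_le_pow_left₀ (Real.exp_nonneg _) hb2 n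
  rw [← Real.exp_nat_mul] at hpow2
  rw [← hNdef] at hpow2
  have hmono2 : Real.exp (-γ) ≤ Real.exp (N * -(4 / 3 * P)) := by
    apply Real.exp_le_exp.2
    linarith only [hNP_up, hγ0]
  have hu := Real.add_one_le_exp (-Real.exp (-γ))
  constructor
  · linarith only [hpow1, hmono1]
  · linarith only [hpow2, hmono2, hu]
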